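/- arXiv:1001.1813 — 2 statements merged into one kernel-verified Lean document; each statement's English description precedes it below -/
import Mathlib

section
/- The map x_i = ζ_i, x̄_i = ζ̄_i for 1 ≤ i ≤ n−2, x_{n−1} = ζ_{n−1} + ζ̄_n, x_n = ζ_n − ζ̄_n, x̄_{n−1} = ζ̄_{n−1} + ζ̄_n is a bijection from B_l to B'_l, with inverse given by ζ_n = max(0, x_n), ζ̄_n = max(0, −x_n), ζ_{n−1} = x_{n−1} + min(0, x_n), ζ̄_{n−1} = x̄_{n−1} + min(0, x_n), ζ_i = x_i, ζ̄_i = x̄_i for 1 ≤ i ≤ n−2. -/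
open Finset

/-- Membership in the crystal `B_l` of type `D_n^{(1)}`: coordinates
`ζ_1,…,ζ_n, ζ̄_n,…,ζ̄_1` are nonnegative integers summing to `l` with `ζ_n ζ̄_n = 0`. -/
def memB (n l : ℕ) (z zb : ℕ → ℤ) : Prop :=
  (∀ i, 1 ≤ i → i ≤ n → 0 ≤ z i ∧ 0 ≤ zb i) ∧
  (∑ i ∈ Finset.Icc 1 n, (z i + zb i)) = (l : ℤ) ∧
  z n * zb n = 0

/-- Membership in the set `B'_l`: coordinates `x_1,…,x_n, x̄_{n-1},…,x̄_1`. -/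
def memB' (n l : ℕ) (x xb : ℕ → ℤ) : Prop :=
  (∀ i, 1 ≤ i → i ≤ n - 1 → 0 ≤ x i ∧ 0 ≤ xb i) ∧
  (-(min (x (n - 1)) (xb (n - 1))) ≤ x n) ∧
  (∑ i ∈ Finset.Icc 1 (n - 1), (x i + xb i)) + x n = (l : ℤ)

/-- Forward map `B_l → B'_l`, the `x`-coordinates. -/
def fwdX (n : ℕ) (z zb : ℕ → ℤ) : ℕ → ℤ := fun i =>
  if i = n - 1 then z (n - 1) + zb n
  else if i = n then z n - zb n
  else z i

/-- Forward map `B_l → B'_l`, the `x̄`-coordinates. -/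
def fwdXb (n : ℕ) (z zb : ℕ → ℤ) : ℕ → ℤ := fun i =>
  if i = n - 1 then zb (n - 1) + zb n else zb i

/-- Inverse map `B'_l → B_l`, the `ζ`-coordinates. -/
def bwdZ (n : ℕ) (x xb : ℕ → ℤ) : ℕ → ℤ := fun i =>
  if i = n then max 0 (x n)
  else if i = n - 1 then x (n - 1) + min 0 (x n)
  else x i

/-- Inverse map `B'_l → B_l`, the `ζ̄`-coordinates. -/
def bwdZb (n : ℕ) (x xb : ℕ → ℤ) : ℕ → ℤ := fun i =>
  if i = n then max 0 (-(x n))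
  else if i = n - 1 then xb (n - 1) + min 0 (x n)
  else xb i



/-- sum over Icc 1 (n-1) differing only at n-1 by c -/
lemma sum_shift (n : ℕ) (hn : 3 ≤ n) (f g : ℕ → ℤ) (c : ℤ)
    (h1 : f (n-1) = g (n-1) + c)
    (h2 : ∀ i, i ∈ Finset.Icc 1 (n-1) → i ≠ n - 1 → f i = g i) :
    ∑ i ∈ Finset.Icc 1 (n-1), f i = (∑ i ∈ Finset.Icc 1 (n-1), g i) + c := by
  have hmem : n - 1 ∈ Finset.Icc 1 (n-1) := by
    simp [Finset.mem_Icc]; omega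
  rw [← Finset.add_sum_erase _ f hmem, ← Finset.add_sum_erase _ g hmem, h1]
  have : ∑ i ∈ (Finset.Icc 1 (n-1)).erase (n-1), f i
      = ∑ i ∈ (Finset.Icc 1 (n-1)).erase (n-1), g i := by
    apply Finset.sum_congr rfl
    intro i hi
    exact h2 i (Finset.mem_of_mem_erase hi) (Finset.ne_of_mem_erase hi)
  rw [this]; ring

lemma icc_split (n : ℕ) (hn : 3 ≤ n) (f : ℕ → ℤ) :
    ∑ i ∈ Finset.Icc 1 n, f i = (∑ i ∈ Finset.Icc 1 (n-1), f i) + f n := by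
  have h : n = (n - 1) + 1 := by omega
  rw [h, Finset.sum_Icc_succ_top (by omega)]
  congr 1 <;> omega

/-- The coordinate change (\ref{xz4})-(\ref{xz5}) is a bijection `B_l → B'_l`
with inverse (\ref{xz6})-(\ref{xz7}). -/
theorem stmt0 (n l : ℕ) (hn : 3 ≤ n) (hl : 1 ≤ l) :
    (∀ z zb : ℕ → ℤ, memB n l z zb →
      memB' n l (fwdX n z zb) (fwdXb n z zb) ∧
      (∀ i, 1 ≤ i → i ≤ n →
        bwdZ n (fwdX n z zb) (fwdXb n z zb) i = z i ∧
        bwdZb n (fwdX n z zb) (fwdXb n z zb) i = zb i)) ∧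
    (∀ x xb : ℕ → ℤ, memB' n l x xb →
      memB n l (bwdZ n x xb) (bwdZb n x xb) ∧
      (∀ i, 1 ≤ i → i ≤ n →
        fwdX n (bwdZ n x xb) (bwdZb n x xb) i = x i) ∧
      (∀ i, 1 ≤ i → i ≤ n - 1 →
        fwdXb n (bwdZ n x xb) (bwdZb n x xb) i = xb i)) := by
  have hne : n - 1 ≠ n := by omega
  constructor
  · rintro z zb ⟨hpos, hsum, hprod⟩
    have hz0 : z n = 0 ∨ zb n = 0 := mul_eq_zero.mp hprod
    have hzn := hpos n (by omega) le_rfl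
    have hzn1 := hpos (n-1) (by omega) (by omega)
    refine ⟨⟨?_, ?_, ?_⟩, ?_⟩
    · intro i h1 h2
      by_cases hi : i = n - 1
      · subst hi; simp [fwdX, fwdXb]; constructor <;> omega
      · simp [fwdX, fwdXb, hi, show i ≠ n by omega]
        exact hpos i h1 (by omega)
    · simp [fwdX, fwdXb, hne]
      omega
    · have key : ∑ i ∈ Finset.Icc 1 (n-1), (fwdX n z zb i + fwdXb n z zb i)
          = (∑ i ∈ Finset.Icc 1 (n-1), (z i + zb i)) + 2 * zb n := by
        apply sum_shift n hn
        · simp [fwdX, fwdXb]; ring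
        · intro i hi hi'
          simp only [Finset.mem_Icc] at hi
          simp [fwdX, fwdXb, hi', show i ≠ n by omega]
      rw [key]
      rw [icc_split n hn] at hsum
      simp [fwdX, fwdXb, hne]
      omega
    · intro i h1 h2
      by_cases hin : i = n
      · subst hin
        simp [bwdZ, bwdZb, fwdX, fwdXb, hne]
        constructor <;> omega
      · by_cases hi : i = n - 1
        · subst hi
          simp [bwdZ, bwdZb, fwdX, fwdXb, hne]
          constructor <;> omega
        · simp [bwdZ, bwdZb, fwdX, fwdXb, hi, hin]
  · rintro x xb ⟨hpos, hmin, hsum⟩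
    have hxn1 := hpos (n-1) (by omega) le_rfl
    refine ⟨⟨?_, ?_, ?_⟩, ?_, ?_⟩
    · intro i h1 h2
      by_cases hin : i = n
      · subst hin; constructor <;> simp [bwdZ, bwdZb]
      · by_cases hi : i = n - 1
        · subst hi; simp [bwdZ, bwdZb, hne]
          constructor <;> omega
        · simp [bwdZ, bwdZb, hi, hin]
          exact hpos i h1 (by omega)
    · have key : ∑ i ∈ Finset.Icc 1 (n-1), (bwdZ n x xb i + bwdZb n x xb i)
          = (∑ i ∈ Finset.Icc 1 (n-1), (x i + xb i)) + 2 * min 0 (x n) := by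
        apply sum_shift n hn
        · simp [bwdZ, bwdZb, hne]; ring
        · intro i hi hi'
          simp only [Finset.mem_Icc] at hi
          simp [bwdZ, bwdZb, hi', show i ≠ n by omega]
      rw [icc_split n hn, key]
      simp [bwdZ, bwdZb]
      omega
    · have key : max 0 (x n) * max 0 (-(x n)) = 0 := by
        rcases le_total 0 (x n) with h | h
        · rw [max_eq_left (by omega : -(x n) ≤ 0), mul_zero]
        · rw [max_eq_left h, zero_mul]
      simpa [bwdZ, bwdZb] using key
    · intro i h1 h2
      by_cases hin : i = n
      · subst hin; simp [fwdX, bwdZ, bwdZb, hne]; omega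
      · by_cases hi : i = n - 1
        · subst hi; simp [fwdX, bwdZ, bwdZb, hne]; omega
        · simp [fwdX, bwdZ, bwdZb, hi, hin]
    · intro i h1 h2
      by_cases hi : i = n - 1
      · subst hi; simp [fwdXb, bwdZb, hne]; omega
      · simp [fwdXb, bwdZb, hi, show i ≠ n by omega]
end

section
/- Suppose for each k ∈ {1,…,L} and each label g the increments δρ_g = ρ_g(p_{[k]}) − ρ_g(p_{[k−1]}) are given by the counting-function formulas ρ_{v_a} = Σ(ζ_2+…+ζ_n+ζ̄_n+…+ζ̄_{a+1}+ζ̄_1) for 0 ≤ a ≤ n−2, ρ_{v_{n−1}} = Σ(ζ_2+…+ζ_{n−1}+ζ_n+ζ̄_1), ρ_{v^∗_{n−1}} = Σ(ζ_2+…+ζ_{n−1}+ζ̄_n+ζ̄_1), ρ_{w_a−v_a} = Σ(ζ_2+…+ζ_a+ζ̄_1) for 1 ≤ a ≤ n−2, all evaluated on the components of p_{[k]}, plus a common term independent of the label. Then the local state p_k = (ζ_1,…,ζ_n, ζ̄_n,…,ζ̄_1) ∈ B_{l_k} is reproduced by: ζ_1 = l_k − δρ_{v_0} + δρ_{w_1−v_1};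 ζ_a = δρ_{w_a−v_a} − δρ_{w_{a−1}−v_{a−1}} for 2 ≤ a ≤ n−2; ζ_{n−1} = min(δρ_{v_{n−1}}, δρ_{v^∗_{n−1}}) − δρ_{w_{n−2}−v_{n−2}}; ζ_n = max(δρ_{v_{n−1}} − δρ_{v^∗_{n−1}}, 0); ζ̄_n = max(δρ_{v^∗_{n−1}} − δρ_{v_{n−1}}, 0); ζ̄_{n−1} = −max(δρ_{v_{n−1}}, δρ_{v^∗_{n−1}}) + δρ_{v_{n−2}}; ζ̄_a = δρ_{v_{a−1}} − δρ_{v_a} for 1 ≤ a ≤ n−2. -/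
open Finset

/-- `γ_{v_a}(ζ) = ζ_2 + ⋯ + ζ_n + ζ̄_n + ⋯ + ζ̄_{a+1} + ζ̄_1` for `0 ≤ a ≤ n-2`. -/
def gv (n a : ℕ) (z zb : ℕ → ℤ) : ℤ :=
  (∑ i ∈ Finset.Icc 2 n, z i) + (∑ i ∈ Finset.Icc (a + 1) n, zb i) + zb 1

/-- `γ_{v_{n-1}}(ζ) = ζ_2 + ⋯ + ζ_{n-1} + ζ_n + ζ̄_1`. -/
def gvn (n : ℕ) (z zb : ℕ → ℤ) : ℤ :=
  (∑ i ∈ Finset.Icc 2 n, z i) + zb 1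

/-- `γ_{v^∗_{n-1}}(ζ) = ζ_2 + ⋯ + ζ_{n-1} + ζ̄_n + ζ̄_1`. -/
def gvns (n : ℕ) (z zb : ℕ → ℤ) : ℤ :=
  (∑ i ∈ Finset.Icc 2 (n - 1), z i) + zb n + zb 1

/-- `γ_{w_a - v_a}(ζ) = ζ_2 + ⋯ + ζ_a + ζ̄_1` for `1 ≤ a ≤ n-2`. -/
def gwv (a : ℕ) (z zb : ℕ → ℤ) : ℤ :=
  (∑ i ∈ Finset.Icc 2 a, z i) + zb 1

lemma sum_Icc_bot (a b : ℕ) (f : ℕ → ℤ) (h : a ≤ b) :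
    ∑ i ∈ Finset.Icc a b, f i = f a + ∑ i ∈ Finset.Icc (a+1) b, f i := by
  rw [← Finset.Ioc_insert_left h, Finset.sum_insert Finset.left_notMem_Ioc,
    ← Finset.Icc_add_one_left_eq_Ioc]

/-- If the increments `δρ_g` of the counting functions equal `γ_g(p_k)` plus a
common term `c` independent of the label `g`, then the local state
`p_k ∈ B_{l_k}` is reproduced by the stated piecewise linear formulas. -/
theorem stmt7 (n l : ℕ) (hn : 3 ≤ n) (z zb : ℕ → ℤ) (hmem : memB n l z zb)
    (c : ℤ) (dv dwv : ℕ → ℤ) (dvn dvs : ℤ)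
    (hdv : ∀ a, a ≤ n - 2 → dv a = gv n a z zb + c)
    (hdvn : dvn = gvn n z zb + c)
    (hdvs : dvs = gvns n z zb + c)
    (hdwv : ∀ a, 1 ≤ a → a ≤ n - 2 → dwv a = gwv a z zb + c) :
    z 1 = (l : ℤ) - dv 0 + dwv 1 ∧
    (∀ a, 2 ≤ a → a ≤ n - 2 → z a = dwv a - dwv (a - 1)) ∧
    z (n - 1) = min dvn dvs - dwv (n - 2) ∧
    z n = max (dvn - dvs) 0 ∧
    zb n = max (dvs - dvn) 0 ∧
    zb (n - 1) = -(max dvn dvs) + dv (n - 2) ∧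
    (∀ a, 1 ≤ a → a ≤ n - 2 → zb a = dv (a - 1) - dv a) := by
  obtain ⟨hpos, hsum, hprod⟩ := hmem
  obtain ⟨m, rfl⟩ : ∃ m, n = m + 3 := ⟨n - 3, by omega⟩
  clear hn
  have e2 : m + 3 - 2 = m + 1 := by omega
  have e1 : m + 3 - 1 = m + 2 := by omega
  rw [e2, e1] at *
  have hzn : 0 ≤ z (m + 3) := (hpos (m+3) (by omega) le_rfl).1
  have hzbn : 0 ≤ zb (m + 3) := (hpos (m+3) (by omega) le_rfl).2
  -- sum splits
  have hsz1 : ∑ i ∈ Finset.Icc 2 (m+3), z i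
      = ∑ i ∈ Finset.Icc 2 (m+2), z i + z (m+3) :=
    Finset.sum_Icc_succ_top (by omega) _
  have hsz2 : ∑ i ∈ Finset.Icc 2 (m+2), z i
      = ∑ i ∈ Finset.Icc 2 (m+1), z i + z (m+2) :=
    Finset.sum_Icc_succ_top (by omega) _
  have hszb : ∑ i ∈ Finset.Icc (m+2) (m+3), zb i = zb (m+2) + zb (m+3) := by
    rw [Finset.sum_Icc_succ_top (by omega), Finset.Icc_self, Finset.sum_singleton]
  have hcases := mul_eq_zero.mp hprod
  refine ⟨?_, ?_, ?_, ?_, ?_, ?_, ?_⟩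
  · -- z 1
    rw [hdv 0 (by omega), hdwv 1 (by omega) (by omega)]
    unfold gv gwv
    rw [sum_Icc_bot 1 (m+3) _ (by omega)] at hsum
    have hdistrib : ∑ i ∈ Finset.Icc 2 (m+3), (z i + zb i)
        = ∑ i ∈ Finset.Icc 2 (m+3), z i + ∑ i ∈ Finset.Icc 2 (m+3), zb i :=
      Finset.sum_add_distrib
    have h01 : ∑ i ∈ Finset.Icc (0+1) (m+3), zb i
        = zb 1 + ∑ i ∈ Finset.Icc 2 (m+3), zb i := sum_Icc_bot 1 (m+3) _ (by omega)
    rw [show (0:ℕ)+1 = 1 from rfl] at h01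
    have hempty : ∑ i ∈ Finset.Icc 2 1, z i = 0 := by
      rw [Finset.Icc_eq_empty (by omega)]; simp
    rw [h01, hempty]
    linarith
  · -- z a, 2 ≤ a ≤ m+1
    intro a ha2 ham
    rw [hdwv a (by omega) ham, hdwv (a-1) (by omega) (by omega)]
    unfold gwv
    have : ∑ i ∈ Finset.Icc 2 a, z i = ∑ i ∈ Finset.Icc 2 (a-1), z i + z a := by
      have := Finset.sum_Icc_succ_top (a := 2) (b := a - 1) (by omega) z
      rw [show a - 1 + 1 = a by omega] at this
      exact this
    linarith [this]
  · -- z (m+2)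
    rw [hdvn, hdvs, hdwv (m+1) (by omega) le_rfl]
    unfold gvn gvns gwv
    rw [show m+3-1 = m+2 from by omega]
    rcases hcases with h0 | h0
    · rw [min_eq_left (by linarith [hsz1])]
      linarith [hsz1, hsz2]
    · rw [min_eq_right (by linarith [hsz1])]
      linarith [hsz2]
  · -- z (m+3)
    rw [hdvn, hdvs]
    unfold gvn gvns
    rw [show m+3-1 = m+2 from by omega]
    rcases hcases with h0 | h0
    · rw [max_eq_right (by linarith [hsz1])]
      linarith [hsz1]
    · rw [max_eq_left (by linarith [hsz1])]
      linarith [hsz1]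
  · -- zb (m+3)
    rw [hdvn, hdvs]
    unfold gvn gvns
    rw [show m+3-1 = m+2 from by omega]
    rcases hcases with h0 | h0
    · rw [max_eq_left (by linarith [hsz1])]
      linarith [hsz1]
    · rw [max_eq_right (by linarith [hsz1])]
      linarith [hsz1]
  · -- zb (m+2)
    rw [hdvn, hdvs, hdv (m+1) le_rfl]
    unfold gvn gvns gv
    rw [show m+3-1 = m+2 from by omega, show m+1+1 = m+2 from rfl, hszb]
    rcases hcases with h0 | h0
    · rw [max_eq_right (by linarith [hsz1])]
      linarith [hsz1]
    · rw [max_eq_left (by linarith [hsz1])]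
      linarith [hsz1]
  · -- zb a
    intro a ha1 ham
    rw [hdv a (by omega), hdv (a-1) (by omega)]
    unfold gv
    rw [show a - 1 + 1 = a by omega]
    have : ∑ i ∈ Finset.Icc a (m+3), zb i
        = zb a + ∑ i ∈ Finset.Icc (a+1) (m+3), zb i := sum_Icc_bot a (m+3) _ (by omega)
    linarith [this]
end
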